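/- For all real β with 0 < β ≤ 1, all real μ > 0, and every integer n ≥ 1: Π_{j=1}^{n} j/(μ + (j+1)·(1+β)) ≤ exp(μ²·π²/12)·(n+1)^{−μ·(1−β)}. -/

import Mathlib

open Finset

private lemma aux_hasDeriv12 (x : ℝ) (hx : 0 < x) :
    HasDerivAt (fun y : ℝ => Real.log (1 + y) - y + y ^ 2 / 2) ((1 + x)⁻¹ - 1 + x) x := by
  have h1 : HasDerivAt (fun y : ℝ => 1 + y) 1 x := (hasDerivAt_id x).const_add 1
  have h2 : HasDerivAt (fun y : ℝ => Real.log (1 + y)) (1 / (1 + x)) x :=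
    h1.log (by linarith)
  have h3 : HasDerivAt (fun y : ℝ => y ^ 2 / 2) x x := by
    have := (hasDerivAt_pow 2 x).div_const 2
    simpa using this
  have := (h2.sub (hasDerivAt_id x)).add h3
  convert this using 1
  · rfl
  · rfl
  · rfl
  · rw [one_div]

private lemma aux_log_quad12 {t : ℝ} (ht : 0 ≤ t) : t - t ^ 2 / 2 ≤ Real.log (1 + t) := by
  set g : ℝ → ℝ := fun y => Real.log (1 + y) - y + y ^ 2 / 2 with hg
  have key : MonotoneOn g (Set.Ici (0 : ℝ)) := by
    apply monotoneOn_of_deriv_nonneg (convex_Ici 0)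
    · apply ContinuousOn.add
      apply ContinuousOn.sub
      · exact (continuous_const.add continuous_id).continuousOn.log
          (fun x hx => by
            simp only [Set.mem_Ici] at hx; intro h; simp only [Pi.add_apply, id_eq] at h; linarith)
      · exact continuous_id.continuousOn
      · exact ((continuous_pow 2).div_const 2).continuousOn
    · intro x hx
      rw [interior_Ici] at hx
      exact (aux_hasDeriv12 x hx).differentiableAt.differentiableWithinAt
    · intro x hx
      rw [interior_Ici] at hx
      have hx' : (0:ℝ) < x := hx
      rw [(aux_hasDeriv12 x hx').deriv]
      have h1 : (0:ℝ) < 1 + x := by linarith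
      have : (1 + x)⁻¹ - 1 + x = x ^ 2 / (1 + x) := by field_simp; ring
      rw [this]; positivity
  have h0 : (0:ℝ) ∈ Set.Ici (0:ℝ) := Set.mem_Ici.mpr le_rfl
  have ht' : t ∈ Set.Ici (0:ℝ) := ht
  have := key h0 ht' ht
  simp only [hg, add_zero, Real.log_one] at this
  norm_num at this
  linarith

private lemma aux_harmonic12 (n : ℕ) :
    Real.log ((n : ℝ) + 1) ≤ ∑ j ∈ Finset.Icc 1 n, (1 : ℝ) / j := by
  have tele : ∑ i ∈ Finset.range n,
      (Real.log ((i : ℝ) + 1 + 1) - Real.log ((i : ℝ) + 1)) = Real.log ((n : ℝ) + 1) := by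
    have h := Finset.sum_range_sub (fun i : ℕ => Real.log ((i : ℝ) + 1)) n
    push_cast at h
    simpa using h
  have hIcc : ∑ j ∈ Finset.Icc 1 n, (1 : ℝ) / j = ∑ i ∈ Finset.range n, (1 : ℝ) / (i + 1) := by
    rw [← Finset.Ico_add_one_right_eq_Icc, Finset.sum_Ico_eq_sum_range]
    simp [add_comm]
  rw [hIcc, ← tele]
  apply Finset.sum_le_sum
  intro i _
  have hi : (0:ℝ) < (i:ℝ) + 1 := by positivity
  have : Real.log ((i:ℝ) + 1 + 1) - Real.log ((i:ℝ) + 1)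
      = Real.log (((i:ℝ) + 1 + 1) / ((i:ℝ) + 1)) := by
    rw [Real.log_div (by linarith) (by linarith)]
  rw [this]
  have hle := Real.log_le_sub_one_of_pos (show (0:ℝ) < ((i:ℝ)+1+1)/((i:ℝ)+1) by positivity)
  have : ((i:ℝ) + 1 + 1) / ((i:ℝ) + 1) - 1 = 1 / ((i:ℝ) + 1) := by field_simp; ring
  linarith

private lemma aux_basel12 (n : ℕ) :
    ∑ j ∈ Finset.Icc 1 n, (1 : ℝ) / (j : ℝ) ^ 2 ≤ Real.pi ^ 2 / 6 := by
  have h := hasSum_zeta_two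
  have := sum_le_hasSum (Finset.Icc 1 n) (fun i _ => by positivity) h
  exact this

/-- **Key estimate of Theorem 3 (polynomial-lifetime critical SIS regime).**
For `0 < β ≤ 1`, `μ > 0` and every integer `n ≥ 1`,
`∏_{j=1}^{n} j/(μ + (j+1)(1+β)) ≤ exp(μ²π²/12)·(n+1)^{−μ(1−β)}`. -/
theorem stmt12 (β μ : ℝ) (hβ0 : 0 < β) (hβ1 : β ≤ 1) (hμ : 0 < μ)
    (n : ℕ) (hn : 1 ≤ n) :
    ∏ j ∈ Finset.Icc 1 n, (j : ℝ) / (μ + ((j : ℝ) + 1) * (1 + β)) ≤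
      Real.exp (μ ^ 2 * Real.pi ^ 2 / 12) * ((n : ℝ) + 1) ^ (-(μ * (1 - β))) := by
  -- Step 1: bound each factor by exp(μ²/(2j²) - μ/j)
  have step1 : ∀ j ∈ Finset.Icc 1 n,
      (j : ℝ) / (μ + ((j : ℝ) + 1) * (1 + β)) ≤
        Real.exp (μ ^ 2 / (2 * (j : ℝ) ^ 2) - μ / j) := by
    intro j hj
    rw [Finset.mem_Icc] at hj
    have hj1 : (1:ℝ) ≤ (j:ℝ) := by exact_mod_cast hj.1
    have hjpos : (0:ℝ) < (j:ℝ) := by linarith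
    set t : ℝ := μ / j with htdef
    have htpos : 0 < t := by positivity
    -- factor ≤ j/(j+μ)
    have h1 : (j : ℝ) / (μ + ((j : ℝ) + 1) * (1 + β)) ≤ (j : ℝ) / ((j : ℝ) + μ) := by
      apply div_le_div_of_nonneg_left (le_of_lt hjpos) (by positivity)
      nlinarith
    -- j/(j+μ) = 1/(1+t)
    have h2 : (j : ℝ) / ((j : ℝ) + μ) = 1 / (1 + t) := by
      rw [htdef]; field_simp
    -- 1/(1+t) ≤ exp(t²/2 - t)
    have h3 : Real.exp (t - t ^ 2 / 2) ≤ 1 + t := by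
      have := aux_log_quad12 (le_of_lt htpos)
      calc Real.exp (t - t ^ 2 / 2) ≤ Real.exp (Real.log (1 + t)) :=
            Real.exp_le_exp.mpr this
        _ = 1 + t := Real.exp_log (by linarith)
    have h4 : 1 / (1 + t) ≤ Real.exp (t ^ 2 / 2 - t) := by
      rw [div_le_iff₀ (by linarith : (0:ℝ) < 1 + t)]
      calc (1:ℝ) = Real.exp (t ^ 2 / 2 - t) * Real.exp (t - t ^ 2 / 2) := by
            rw [← Real.exp_add]; norm_num
        _ ≤ Real.exp (t ^ 2 / 2 - t) * (1 + t) := by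
            apply mul_le_mul_of_nonneg_left h3 (Real.exp_pos _).le
    have h5 : t ^ 2 / 2 - t = μ ^ 2 / (2 * (j : ℝ) ^ 2) - μ / j := by
      rw [htdef]; field_simp
    rw [← h5]
    calc (j : ℝ) / (μ + ((j : ℝ) + 1) * (1 + β)) ≤ (j : ℝ) / ((j : ℝ) + μ) := h1
      _ = 1 / (1 + t) := h2
      _ ≤ Real.exp (t ^ 2 / 2 - t) := h4
  -- Step 2: product of exps
  have step2 : ∏ j ∈ Finset.Icc 1 n, (j : ℝ) / (μ + ((j : ℝ) + 1) * (1 + β)) ≤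
      Real.exp (∑ j ∈ Finset.Icc 1 n, (μ ^ 2 / (2 * (j : ℝ) ^ 2) - μ / j)) := by
    rw [Real.exp_sum]
    apply Finset.prod_le_prod
    · intro j hj
      rw [Finset.mem_Icc] at hj
      have hj1 : (1:ℝ) ≤ (j:ℝ) := by exact_mod_cast hj.1
      have : (0:ℝ) < μ + ((j:ℝ) + 1) * (1 + β) := by nlinarith
      positivity
    · exact step1
  -- Step 3: bound the sum
  have hsum : ∑ j ∈ Finset.Icc 1 n, (μ ^ 2 / (2 * (j : ℝ) ^ 2) - μ / j) ≤
      μ ^ 2 * Real.pi ^ 2 / 12 - μ * Real.log ((n : ℝ) + 1) := by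
    rw [Finset.sum_sub_distrib]
    have hA : ∑ j ∈ Finset.Icc 1 n, μ ^ 2 / (2 * (j : ℝ) ^ 2) ≤ μ ^ 2 * Real.pi ^ 2 / 12 := by
      have : ∑ j ∈ Finset.Icc 1 n, μ ^ 2 / (2 * (j : ℝ) ^ 2)
          = (μ ^ 2 / 2) * ∑ j ∈ Finset.Icc 1 n, (1:ℝ) / (j:ℝ) ^ 2 := by
        rw [Finset.mul_sum]
        apply Finset.sum_congr rfl
        intro j hj
        rw [Finset.mem_Icc] at hj
        have : (0:ℝ) < (j:ℝ) := by exact_mod_cast hj.1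
        field_simp
      rw [this]
      have := aux_basel12 n
      nlinarith [sq_nonneg μ]
    have hB : μ * Real.log ((n : ℝ) + 1) ≤ ∑ j ∈ Finset.Icc 1 n, μ / j := by
      have : ∑ j ∈ Finset.Icc 1 n, μ / (j:ℝ) = μ * ∑ j ∈ Finset.Icc 1 n, (1:ℝ) / j := by
        rw [Finset.mul_sum]
        apply Finset.sum_congr rfl
        intro j _
        rw [mul_one_div]
      rw [this]
      exact mul_le_mul_of_nonneg_left (aux_harmonic12 n) hμ.le
    linarith
  -- Step 4: combine
  have hn1 : (1:ℝ) ≤ (n:ℝ) + 1 := by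
    have : (0:ℝ) ≤ (n:ℝ) := Nat.cast_nonneg n
    linarith
  have key : ∏ j ∈ Finset.Icc 1 n, (j : ℝ) / (μ + ((j : ℝ) + 1) * (1 + β)) ≤
      Real.exp (μ ^ 2 * Real.pi ^ 2 / 12) * ((n : ℝ) + 1) ^ (-μ) := by
    calc ∏ j ∈ Finset.Icc 1 n, (j : ℝ) / (μ + ((j : ℝ) + 1) * (1 + β))
        ≤ Real.exp (∑ j ∈ Finset.Icc 1 n, (μ ^ 2 / (2 * (j : ℝ) ^ 2) - μ / j)) := step2
      _ ≤ Real.exp (μ ^ 2 * Real.pi ^ 2 / 12 - μ * Real.log ((n : ℝ) + 1)) :=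
          Real.exp_le_exp.mpr hsum
      _ = Real.exp (μ ^ 2 * Real.pi ^ 2 / 12) * ((n : ℝ) + 1) ^ (-μ) := by
          rw [Real.exp_sub, Real.rpow_def_of_pos (by linarith : (0:ℝ) < (n:ℝ)+1),
            div_eq_mul_inv, ← Real.exp_neg]
          congr 1
          ring
  refine key.trans ?_
  apply mul_le_mul_of_nonneg_left _ (Real.exp_pos _).le
  apply Real.rpow_le_rpow_of_exponent_le hn1
  nlinarith
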